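/- Let F(n) = 2·⌊n⌋₂ − 1 where ⌊n⌋₂ is the 2-part of n. Then (1/n)·Σ_{d|n} μ(n/d)·F(2d) equals 3 if n = 1, equals 2 if n = 2^k for some k ≥ 1, and equals 0 otherwise. -/

import Mathlib

open Classical

open ArithmeticFunction Finset in
noncomputable def fgFTwo : ArithmeticFunction ℚ :=
  ⟨fun n => if n = 0 then 0 else 2 ^ (n.factorization 2), by simp⟩

open ArithmeticFunction Finset ArithmeticFunction.Moebius

lemma fgFTwo_apply {n : ℕ} (hn : n ≠ 0) : fgFTwo n = 2 ^ (n.factorization 2) := if_neg hn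

lemma fgFTwo_mult : fgFTwo.IsMultiplicative := by
  constructor
  · simp [fgFTwo_apply]
  · intro m n h
    rcases eq_or_ne m 0 with rfl | hm
    · rcases Nat.coprime_zero_left n |>.mp h with rfl
      simp [fgFTwo]
    rcases eq_or_ne n 0 with rfl | hn
    · rcases Nat.coprime_zero_right m |>.mp h with rfl
      simp [fgFTwo]
    rw [fgFTwo_apply hm, fgFTwo_apply hn, fgFTwo_apply (Nat.mul_ne_zero hm hn),
      Nat.factorization_mul hm hn, ← pow_add]
    rfl

noncomputable def fgG : ArithmeticFunction ℚ := (μ : ArithmeticFunction ℚ) * fgFTwo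

lemma fgG_mult : fgG.IsMultiplicative :=
  isMultiplicative_moebius.intCast.mul fgFTwo_mult

lemma fgG_apply {n : ℕ} (hn : n ≠ 0) :
    fgG n = ∑ d ∈ n.divisors, (μ (n / d) : ℚ) * 2 ^ (d.factorization 2) := by
  rw [fgG, mul_apply,
    Nat.sum_divisorsAntidiagonal' (f := fun a b => (μ : ArithmeticFunction ℚ) a * fgFTwo b)]
  refine Finset.sum_congr rfl fun d hd => ?_
  rw [intCoe_apply, fgFTwo_apply (Nat.ne_of_gt (Nat.pos_of_mem_divisors hd))]

lemma fgG_pow (a : ℕ) : fgG (2 ^ a) = if a = 0 then 1 else 2 ^ (a - 1) := by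
  rcases a with _ | b
  · simpa using fgG_mult.map_one
  rw [if_neg (Nat.succ_ne_zero b), fgG_apply (pow_ne_zero _ two_ne_zero),
    Nat.sum_divisors_prime_pow Nat.prime_two]
  have hterm : ∀ i ∈ Finset.range (b + 2),
      (μ (2 ^ (b + 1) / 2 ^ i) : ℚ) * 2 ^ ((2 ^ i).factorization 2)
        = (μ (2 ^ (b + 1 - i)) : ℚ) * 2 ^ i := by
    intro i hi
    rw [Finset.mem_range] at hi
    rw [Nat.pow_div (by omega) (by norm_num), Nat.Prime.factorization_pow Nat.prime_two]
    simp
  rw [Finset.sum_congr rfl hterm, Finset.sum_range_succ, Finset.sum_range_succ]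
  have hzero : ∀ i ∈ Finset.range b, (μ (2 ^ (b + 1 - i)) : ℚ) * 2 ^ i = 0 := by
    intro i hi
    rw [Finset.mem_range] at hi
    rw [moebius_apply_prime_pow Nat.prime_two (by omega), if_neg (by omega)]
    simp
  rw [Finset.sum_eq_zero hzero]
  have h1 : b + 1 - b = 1 := by omega
  have h2 : b + 1 - (b + 1) = 0 := by omega
  rw [h1, h2, pow_one, pow_zero, moebius_apply_prime Nat.prime_two, moebius_apply_one,
    Nat.add_sub_cancel]
  push_cast
  rw [pow_succ]
  ring

lemma fg_musum (n : ℕ) : ∑ d ∈ n.divisors, (μ d : ℚ) = if n = 1 then 1 else 0 := by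
  have h := coe_moebius_mul_coe_zeta (R := ℚ)
  have h2 := congrArg (fun f : ArithmeticFunction ℚ => f n) h
  simp only [coe_mul_zeta_apply, one_apply] at h2
  simpa [intCoe_apply] using h2

lemma fgG_odd {m : ℕ} (hm : m ≠ 0) (hodd : ¬ 2 ∣ m) : fgG m = if m = 1 then 1 else 0 := by
  rw [fgG_apply hm]
  have : ∀ d ∈ m.divisors, (μ (m / d) : ℚ) * 2 ^ (d.factorization 2) = (μ (m / d) : ℚ) := by
    intro d hd
    have hdvd : d ∣ m := Nat.dvd_of_mem_divisors hd
    have : d.factorization 2 = 0 :=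
      Nat.factorization_eq_zero_of_not_dvd (fun h => hodd (h.trans hdvd))
    rw [this, pow_zero, mul_one]
  rw [Finset.sum_congr rfl this, Nat.sum_div_divisors m (fun d => (μ d : ℚ)), fg_musum]

open ArithmeticFunction ArithmeticFunction.Moebius in
theorem feigenbaum_square_orbit_count (F : ℕ → ℚ)
    (hF : ∀ n : ℕ, 1 ≤ n → F n = 2 * 2 ^ (n.factorization 2) - 1) :
    ∀ n : ℕ, 1 ≤ n →
      (1 / (n : ℚ)) * ∑ d ∈ n.divisors, (μ (n / d) : ℚ) * F (2 * d) =
        if n = 1 then 3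
        else if ∃ k : ℕ, 1 ≤ k ∧ n = 2 ^ k then 2
        else 0 := by
  intro n hn
  have hn0 : n ≠ 0 := by omega
  -- rewrite the sum
  have hsum : ∑ d ∈ n.divisors, (μ (n / d) : ℚ) * F (2 * d)
      = 4 * fgG n - (if n = 1 then 1 else 0) := by
    have hterm : ∀ d ∈ n.divisors, (μ (n / d) : ℚ) * F (2 * d)
        = 4 * ((μ (n / d) : ℚ) * 2 ^ (d.factorization 2)) - (μ (n / d) : ℚ) := by
      intro d hd
      have hd0 : d ≠ 0 := Nat.ne_of_gt (Nat.pos_of_mem_divisors hd)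
      rw [hF (2 * d) (by omega), Nat.factorization_mul two_ne_zero hd0]
      rw [Nat.Prime.factorization Nat.prime_two]
      simp only [Finsupp.add_apply, Finsupp.single_eq_same]
      rw [pow_add, pow_one]
      ring
    rw [Finset.sum_congr rfl hterm, Finset.sum_sub_distrib, ← Finset.mul_sum,
      ← fgG_apply hn0, Nat.sum_div_divisors n (fun d => (μ d : ℚ)), fg_musum]
  rw [hsum]
  by_cases h1 : n = 1
  · subst h1
    have : fgG 1 = 1 := fgG_mult.map_one
    rw [this]
    norm_num
  rw [if_neg h1]
  by_cases h2 : ∃ k : ℕ, 1 ≤ k ∧ n = 2 ^ k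
  · rw [if_pos h2]
    obtain ⟨k, hk, rfl⟩ := h2
    rw [fgG_pow, if_neg (by omega), if_neg h1]
    obtain ⟨j, rfl⟩ : ∃ j, k = j + 1 := ⟨k - 1, by omega⟩
    rw [Nat.add_sub_cancel]
    have hk' : (2 : ℚ) ^ (j + 1) ≠ 0 := pow_ne_zero _ two_ne_zero
    push_cast
    rw [sub_zero, pow_succ]
    field_simp
    ring
  · rw [if_neg h2, if_neg h1]
    -- n has an odd part > 1
    set a := n.factorization 2 with ha
    set m := n / 2 ^ a with hm
    have hnm : 2 ^ a * m = n := Nat.ordProj_mul_ordCompl_eq_self n 2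
    have hm0 : m ≠ 0 := Nat.ne_of_gt (Nat.ordCompl_pos 2 hn0)
    have hmodd : ¬ 2 ∣ m := Nat.not_dvd_ordCompl Nat.prime_two hn0
    have hm1 : m ≠ 1 := by
      intro hmeq
      rw [hmeq, mul_one] at hnm
      rcases Nat.eq_zero_or_pos a with ha0 | ha1
      · exact h1 (by rw [← hnm, ha0, pow_zero])
      · exact h2 ⟨a, ha1, hnm.symm⟩
    have hcop : Nat.Coprime (2 ^ a) m :=
      Nat.Coprime.pow_left _ (Nat.coprime_ordCompl Nat.prime_two hn0)
    have : fgG n = fgG (2 ^ a) * fgG m := by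
      rw [← hnm]
      exact fgG_mult.map_mul_of_coprime hcop
    rw [this, fgG_odd hm0 hmodd, if_neg hm1, mul_zero]
    simp
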